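/- arXiv:1409.7240 — 2 statements merged into one kernel-verified Lean document; each statement's English description precedes it below -/
import Mathlib

section
/- Let G be a finite simple graph whose edge set is partitioned into regions E_1, …, E_k, let V_s be a skeleton set (a set of vertices containing every boundary vertex of the partition), and let G_s be the associated skeleton graph. Let e be an edge of G with e ∈ E_j, let G′ = G − e be equipped with the region partition E_1, …, E_j ∖ {e}, …, E_k and the same skeleton set V_s, and let G′_s be the skeleton graph of G′. Then the number of connected components of G′_s is strictly greater than the number of connected components of G_s if and only if e is a bridge of G and there exist two vertices u, w ∈ V_s ∩ V(R_j) that are connected in the region graph R_j but not connected in R_j − e. -/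
/-- The region graph `R_i`: the graph on the full vertex set `V` whose edges are the
edges of the part `E i`. -/
def regG {V : Type*} {k : ℕ} (E : Fin k → Set (Sym2 V)) (i : Fin k) : SimpleGraph V :=
  SimpleGraph.fromEdgeSet (E i)

/-- The vertex type of the skeleton graph: skeleton vertices (elements of `Vs`)
together with one auxiliary vertex for each pair `(i, group)`, a group being a
nonempty equivalence class of `Vs ∩ V(R i)` under connectivity in `R i` (encoded by
the connected component of `R i` containing the group). -/
def SkelV {V : Type*} {k : ℕ} (E : Fin k → Set (Sym2 V)) (Vs : Set V) : Type _ :=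
  {x : V ⊕ (Σ i : Fin k, (regG E i).ConnectedComponent) //
    Sum.elim (· ∈ Vs)
      (fun p => ∃ v ∈ Vs, v ∈ (regG E p.1).support ∧
        (regG E p.1).connectedComponentMk v = p.2) x}

/-- The skeleton graph: each auxiliary vertex `(i, c)` is joined to every vertex of
its group, i.e. to every `v ∈ Vs` with `v ∈ V(R i)` lying in the component `c`
of `R i`. -/
def skelGraph {V : Type*} {k : ℕ} (E : Fin k → Set (Sym2 V)) (Vs : Set V) :
    SimpleGraph (SkelV E Vs) where
  Adj x y :=
    (∃ (v : V) (i : Fin k) (c : (regG E i).ConnectedComponent),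
      x.1 = Sum.inl v ∧ y.1 = Sum.inr ⟨i, c⟩ ∧
      v ∈ (regG E i).support ∧ (regG E i).connectedComponentMk v = c) ∨
    (∃ (v : V) (i : Fin k) (c : (regG E i).ConnectedComponent),
      y.1 = Sum.inl v ∧ x.1 = Sum.inr ⟨i, c⟩ ∧
      v ∈ (regG E i).support ∧ (regG E i).connectedComponentMk v = c)
  symm := ⟨fun x y h => h.elim Or.inr Or.inl⟩
  loopless := by
    constructor
    rintro x (⟨v, i, c, h1, h2, -, -⟩ | ⟨v, i, c, h1, h2, -, -⟩) <;>
      · rw [h1] at h2; simp at h2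

/- aux -/

namespace Stmt7Aux

open SimpleGraph

variable {V : Type*} {k : ℕ}

/-- The total graph of a partition. -/
def bigG (E : Fin k → Set (Sym2 V)) : SimpleGraph V := SimpleGraph.fromEdgeSet (⋃ i, E i)

lemma regG_le_bigG (E : Fin k → Set (Sym2 V)) (i : Fin k) : regG E i ≤ bigG E :=
  SimpleGraph.fromEdgeSet_mono (Set.subset_iUnion E i)

lemma mem_support_of_reachable_ne {H : SimpleGraph V} {u v : V}
    (h : H.Reachable u v) (hne : u ≠ v) : u ∈ H.support := by
  obtain ⟨W⟩ := h
  cases W with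
  | nil => exact absurd rfl hne
  | cons h _ => exact ⟨_, h⟩

/-- An "anchor" of a skeleton vertex: for `inl u` it is `u`, for an auxiliary
vertex `(i,c)` it is any vertex whose `R i`-component is `c`. -/
def Anchor (E : Fin k → Set (Sym2 V)) (Vs : Set V) (x : SkelV E Vs) (u : V) : Prop :=
  x.1 = Sum.inl u ∨ ∃ i c, x.1 = Sum.inr ⟨i, c⟩ ∧ (regG E i).connectedComponentMk u = c

/-- Two skeleton vertices in the same region component are joined through the aux vertex. -/
lemma two_step (E : Fin k → Set (Sym2 V)) (Vs : Set V) {u w : V} (hu : u ∈ Vs) (hw : w ∈ Vs)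
    (hus : u ∈ (regG E i).support) (hws : w ∈ (regG E i).support)
    (hr : (regG E i).Reachable u w) :
    (skelGraph E Vs).Reachable ⟨Sum.inl u, hu⟩ ⟨Sum.inl w, hw⟩ := by
  have haux : Sum.elim (· ∈ Vs)
      (fun p : Σ i : Fin k, (regG E i).ConnectedComponent =>
        ∃ v ∈ Vs, v ∈ (regG E p.1).support ∧ (regG E p.1).connectedComponentMk v = p.2)
      (Sum.inr ⟨i, (regG E i).connectedComponentMk u⟩) := ⟨u, hu, hus, rfl⟩
  have h1 : (skelGraph E Vs).Adj ⟨Sum.inl u, hu⟩ ⟨_, haux⟩ :=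
    Or.inl ⟨u, i, _, rfl, rfl, hus, rfl⟩
  have h2 : (skelGraph E Vs).Adj ⟨Sum.inl w, hw⟩ ⟨_, haux⟩ :=
    Or.inl ⟨w, i, _, rfl, rfl, hws, ConnectedComponent.sound hr.symm⟩
  exact h1.reachable.trans h2.reachable.symm

/-- Reachability in the skeleton graph yields reachability of anchors in the total graph. -/
lemma reach_of_skelWalk (E : Fin k → Set (Sym2 V)) (Vs : Set V) :
    ∀ {x y : SkelV E Vs} (_ : (skelGraph E Vs).Walk x y) {u v : V},
      Anchor E Vs x u → Anchor E Vs y v → (bigG E).Reachable u v := by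
  intro x y W
  induction W with
  | nil =>
    rintro u v (hx | ⟨i, c, hx, hc⟩) (hy | ⟨i', c', hy, hc'⟩)
    · rw [hx] at hy; cases Sum.inl.inj hy; exact Reachable.refl _
    · rw [hx] at hy; simp at hy
    · rw [hx] at hy; simp at hy
    · rw [hx] at hy
      obtain ⟨rfl, h2⟩ := Sigma.mk.inj_iff.mp (Sum.inr.inj hy)
      cases eq_of_heq h2
      rw [← hc'] at hc
      exact (ConnectedComponent.eq.mp hc).mono (regG_le_bigG E i)
  | cons h W ih =>
    rename_i x z y
    intro u v hxu hyv
    rcases h with ⟨v₀, i, c, hx1, hz1, hsupp, hcomp⟩ | ⟨v₀, i, c, hz1, hx1, hsupp, hcomp⟩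
    · -- x is inl v₀, z is inr ⟨i,c⟩
      rcases hxu with hx2 | ⟨i', c', hx2, _⟩
      · rw [hx1] at hx2; cases Sum.inl.inj hx2
        exact ih (Or.inr ⟨i, c, hz1, hcomp⟩) hyv
      · rw [hx1] at hx2; simp at hx2
    · -- x is inr ⟨i,c⟩, z is inl v₀
      rcases hxu with hx2 | ⟨i', c', hx2, hc'⟩
      · rw [hx1] at hx2; simp at hx2
      · rw [hx1] at hx2
        obtain ⟨rfl, h2⟩ := Sigma.mk.inj_iff.mp (Sum.inr.inj hx2)
        cases eq_of_heq h2
        have hr : (regG E i).Reachable u v₀ := ConnectedComponent.eq.mp (hc'.trans hcomp.symm)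
        exact (hr.mono (regG_le_bigG E i)).trans (ih (Or.inl hz1) hyv)

lemma reach_of_skelReach (E : Fin k → Set (Sym2 V)) (Vs : Set V) {u v : V}
    (hu : u ∈ Vs) (hv : v ∈ Vs)
    (h : (skelGraph E Vs).Reachable ⟨Sum.inl u, hu⟩ ⟨Sum.inl v, hv⟩) :
    (bigG E).Reachable u v := by
  obtain ⟨W⟩ := h
  exact reach_of_skelWalk E Vs W (Or.inl rfl) (Or.inl rfl)

lemma skelReach_of_walk (E : Fin k → Set (Sym2 V)) (Vs : Set V)
    (hVs : ∀ v : V,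
      (∃ i j, i ≠ j ∧ (∃ e ∈ E i, v ∈ e) ∧ (∃ e' ∈ E j, v ∈ e')) → v ∈ Vs) :
    ∀ {x w : V} (_ : (bigG E).Walk x w) (hw : w ∈ Vs) {u : V} (hu : u ∈ Vs),
      (u = x ∨ ∃ i, u ∈ (regG E i).support ∧ x ∈ (regG E i).support ∧
        (regG E i).Reachable u x) →
      (skelGraph E Vs).Reachable ⟨Sum.inl u, hu⟩ ⟨Sum.inl w, hw⟩ := by
  intro x w W
  induction W with
  | nil =>
    rintro hw u hu (rfl | ⟨i, hus, hxs, hr⟩)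
    · exact Reachable.refl _
    · exact two_step E Vs hu hw hus hxs hr
  | cons h W ih =>
    rename_i x y w
    intro hw u hu hyp
    -- the first edge lies in some part
    have hmem : s(x, y) ∈ ⋃ i, E i := ((SimpleGraph.fromEdgeSet_adj _).mp h).1
    have hne : x ≠ y := ((SimpleGraph.fromEdgeSet_adj _).mp h).2
    obtain ⟨i', hi'⟩ := Set.mem_iUnion.mp hmem
    have hadj : (regG E i').Adj x y := (SimpleGraph.fromEdgeSet_adj _).mpr ⟨hi', hne⟩
    rcases hyp with rfl | ⟨i, hus, hxs, hr⟩
    · exact ih hw hu (Or.inr ⟨i', ⟨y, hadj⟩, ⟨u, hadj.symm⟩, hadj.reachable⟩)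
    · by_cases hii : i' = i
      · subst hii
        exact ih hw hu (Or.inr ⟨i', hus, ⟨x, hadj.symm⟩, hr.trans hadj.reachable⟩)
      · -- x is a boundary vertex
        obtain ⟨z, hz⟩ := id hxs
        have hzE : s(x, z) ∈ E i := ((SimpleGraph.fromEdgeSet_adj _).mp hz).1
        have hxVs : x ∈ Vs := hVs x ⟨i, i', fun hh => hii hh.symm,
          ⟨s(x, z), hzE, Sym2.mem_mk_left x z⟩, ⟨s(x, y), hi', Sym2.mem_mk_left x y⟩⟩
        exact (two_step E Vs hu hxVs hus hxs hr).trans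
          (ih hw hxVs (Or.inr ⟨i', ⟨y, hadj⟩, ⟨x, hadj.symm⟩, hadj.reachable⟩))

lemma skelReach_of_reach (E : Fin k → Set (Sym2 V)) (Vs : Set V)
    (hVs : ∀ v : V,
      (∃ i j, i ≠ j ∧ (∃ e ∈ E i, v ∈ e) ∧ (∃ e' ∈ E j, v ∈ e')) → v ∈ Vs)
    {u w : V} (hu : u ∈ Vs) (hw : w ∈ Vs) (h : (bigG E).Reachable u w) :
    (skelGraph E Vs).Reachable ⟨Sum.inl u, hu⟩ ⟨Sum.inl w, hw⟩ := by
  obtain ⟨W⟩ := h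
  exact skelReach_of_walk E Vs hVs W hw hu (Or.inl rfl)

/-- Crossing lemma: a walk either survives deletion of `s(a,b)`, or it connects
its ends to the two endpoints of the deleted edge. -/
lemma crossing (H : SimpleGraph V) (a b : V) :
    ∀ {u w : V}, H.Walk u w →
      (H.deleteEdges {s(a, b)}).Reachable u w ∨
      ((H.deleteEdges {s(a, b)}).Reachable u a ∧ (H.deleteEdges {s(a, b)}).Reachable b w) ∨
      ((H.deleteEdges {s(a, b)}).Reachable u b ∧ (H.deleteEdges {s(a, b)}).Reachable a w) := by
  intro u w W
  induction W with
  | nil => exact Or.inl (Reachable.refl _)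
  | cons h W ih =>
    rename_i u x w
    by_cases hc : s(u, x) = s(a, b)
    · rcases Sym2.eq_iff.mp hc with ⟨rfl, rfl⟩ | ⟨rfl, rfl⟩
      · rcases ih with h1 | ⟨h1, h2⟩ | ⟨h1, h2⟩
        · exact Or.inr (Or.inl ⟨Reachable.refl _, h1⟩)
        · exact Or.inl (h1.symm.trans h2)
        · exact Or.inl h2
      · rcases ih with h1 | ⟨h1, h2⟩ | ⟨h1, h2⟩
        · exact Or.inr (Or.inr ⟨Reachable.refl _, h1⟩)
        · exact Or.inl h2
        · exact Or.inl (h1.symm.trans h2)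
    · have hadj : (H.deleteEdges {s(a, b)}).Adj u x := by
        rw [SimpleGraph.deleteEdges_adj]
        exact ⟨h, by simpa using hc⟩
      rcases ih with h1 | ⟨h1, h2⟩ | ⟨h1, h2⟩
      · exact Or.inl (hadj.reachable.trans h1)
      · exact Or.inr (Or.inl ⟨hadj.reachable.trans h1, h2⟩)
      · exact Or.inr (Or.inr ⟨hadj.reachable.trans h1, h2⟩)

section Deletion

variable {E : Fin k → Set (Sym2 V)} {e : Sym2 V} {j : Fin k}

/-- Removing `e` from a part not containing it does not change the region graph. -/
lemma regG_diff_eq (h : e ∉ E i) : regG (fun i => E i \ {e}) i = regG E i := by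
  unfold regG
  simp only []
  rw [Set.diff_singleton_eq_self h]

lemma regG_diff_self : regG (fun i => E i \ {e}) j = (regG E j).deleteEdges {e} := by
  ext x y
  simp only [regG, SimpleGraph.fromEdgeSet_adj, SimpleGraph.deleteEdges_adj,
    Set.mem_diff, Set.mem_singleton_iff]
  tauto

lemma regG_diff_le (i : Fin k) : regG (fun i => E i \ {e}) i ≤ regG E i :=
  SimpleGraph.fromEdgeSet_mono Set.diff_subset

end Deletion

section Hom

variable (E : Fin k → Set (Sym2 V)) (Vs : Set V) (e : Sym2 V)

/-- The vertex map from the skeleton of the modified partition to the original skeleton. -/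
def Fmap : SkelV (fun i => E i \ {e}) Vs → SkelV E Vs := fun x =>
  match x with
  | ⟨Sum.inl v, hv⟩ => ⟨Sum.inl v, hv⟩
  | ⟨Sum.inr ⟨i, c⟩, hc⟩ =>
    ⟨Sum.inr ⟨i, c.map (SimpleGraph.Hom.ofLE (regG_diff_le i))⟩, by
      obtain ⟨v, hv, hs, hm⟩ := hc
      dsimp only at hs hm ⊢
      exact ⟨v, hv, SimpleGraph.support_mono (regG_diff_le i) hs, by
        rw [← hm]; rfl⟩⟩

/-- `Fmap` is a graph homomorphism. -/
def Fhom : skelGraph (fun i => E i \ {e}) Vs →g skelGraph E Vs where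
  toFun := Fmap E Vs e
  map_rel' := by
    rintro ⟨x1, hx⟩ ⟨y1, hy⟩ (⟨v, i, c, h1, h2, hs, hm⟩ | ⟨v, i, c, h1, h2, hs, hm⟩)
    · subst h1; subst h2
      exact Or.inl ⟨v, i, _, rfl, rfl, SimpleGraph.support_mono (regG_diff_le i) hs, by
        rw [← hm]; rfl⟩
    · subst h1; subst h2
      exact Or.inr ⟨v, i, _, rfl, rfl, SimpleGraph.support_mono (regG_diff_le i) hs, by
        rw [← hm]; rfl⟩

/-- Every skeleton vertex is skeleton-reachable from an `inl` vertex. -/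
lemma exists_inl_reach (x : SkelV E Vs) :
    ∃ (u : V) (hu : u ∈ Vs), (skelGraph E Vs).Reachable x ⟨Sum.inl u, hu⟩ := by
  obtain ⟨x1, hx⟩ := x
  match x1, hx with
  | Sum.inl v, hv => exact ⟨v, hv, Reachable.refl _⟩
  | Sum.inr ⟨i, c⟩, hc =>
    obtain ⟨v, hv, hs, hm⟩ := id hc
    have hadj : (skelGraph E Vs).Adj ⟨Sum.inl v, hv⟩ ⟨Sum.inr ⟨i, c⟩, hc⟩ :=
      Or.inl ⟨v, i, c, rfl, rfl, hs, hm⟩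
    exact ⟨v, hv, hadj.reachable.symm⟩

lemma Fmap_inl (u : V) (hu : u ∈ Vs) :
    Fmap E Vs e (⟨Sum.inl u, hu⟩ : SkelV (fun i => E i \ {e}) Vs) = ⟨Sum.inl u, hu⟩ := rfl

/-- The component map induced by `Fhom` is surjective. -/
lemma Fcc_surj : Function.Surjective
    (SimpleGraph.ConnectedComponent.map (Fhom E Vs e)) := by
  intro d
  obtain ⟨x, rfl⟩ := Quot.mk_surjective d
  obtain ⟨u, hu, hr⟩ := exists_inl_reach E Vs x
  refine ⟨(skelGraph (fun i => E i \ {e}) Vs).connectedComponentMk ⟨Sum.inl u, hu⟩, ?_⟩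
  exact SimpleGraph.ConnectedComponent.sound hr.symm

end Hom

section Sim

variable {E : Fin k → Set (Sym2 V)} {Vs : Set V} {e : Sym2 V} {j : Fin k}

lemma sim_step (hdisj : ∀ i i', i ≠ i' → Disjoint (E i) (E i')) (he : e ∈ E j)
    (hsim : ∀ u w, u ∈ Vs → w ∈ Vs → u ∈ (regG E j).support → w ∈ (regG E j).support →
      (regG E j).Reachable u w → ((regG E j).deleteEdges {e}).Reachable u w)
    {i : Fin k} {u w : V} (hu : u ∈ Vs) (hw : w ∈ Vs)
    (hus : u ∈ (regG E i).support) (hws : w ∈ (regG E i).support)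
    (hr : (regG E i).Reachable u w) :
    (skelGraph (fun i => E i \ {e}) Vs).Reachable ⟨Sum.inl u, hu⟩ ⟨Sum.inl w, hw⟩ := by
  by_cases hij : i = j
  · subst hij
    have hr' : ((regG E i).deleteEdges {e}).Reachable u w := hsim u w hu hw hus hws hr
    by_cases huw : u = w
    · subst huw; exact SimpleGraph.Reachable.refl _
    · have hE : regG (fun i' => E i' \ {e}) i = (regG E i).deleteEdges {e} := regG_diff_self
      exact two_step _ Vs hu hw
        (by rw [hE]; exact mem_support_of_reachable_ne hr' huw)
        (by rw [hE]; exact mem_support_of_reachable_ne hr'.symm (Ne.symm huw))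
        (by rw [hE]; exact hr')
  · have hnotmem : e ∉ E i := fun hmem => Set.disjoint_left.mp (hdisj i j hij) hmem he
    have hE : regG (fun i' => E i' \ {e}) i = regG E i := regG_diff_eq hnotmem
    exact two_step _ Vs hu hw (by rw [hE]; exact hus) (by rw [hE]; exact hws)
      (by rw [hE]; exact hr)

lemma skelReach_sim (hdisj : ∀ i i', i ≠ i' → Disjoint (E i) (E i')) (he : e ∈ E j)
    (hsim : ∀ u w, u ∈ Vs → w ∈ Vs → u ∈ (regG E j).support → w ∈ (regG E j).support →
      (regG E j).Reachable u w → ((regG E j).deleteEdges {e}).Reachable u w) :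
    ∀ {x y : SkelV E Vs} (_ : (skelGraph E Vs).Walk x y) {u v : V}
      (hu : u ∈ Vs) (hv : v ∈ Vs),
      (x.1 = Sum.inl u ∨ ∃ i c, x.1 = Sum.inr ⟨i, c⟩ ∧ u ∈ (regG E i).support ∧
        (regG E i).connectedComponentMk u = c) →
      (y.1 = Sum.inl v ∨ ∃ i c, y.1 = Sum.inr ⟨i, c⟩ ∧ v ∈ (regG E i).support ∧
        (regG E i).connectedComponentMk v = c) →
      (skelGraph (fun i => E i \ {e}) Vs).Reachable ⟨Sum.inl u, hu⟩ ⟨Sum.inl v, hv⟩ := by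
  intro x y W
  induction W with
  | nil =>
    rintro u v hu hv (hx | ⟨i, c, hx, hus, hc⟩) (hy | ⟨i', c', hy, hvs, hc'⟩)
    · rw [hx] at hy; cases Sum.inl.inj hy; exact SimpleGraph.Reachable.refl _
    · rw [hx] at hy; simp at hy
    · rw [hx] at hy; simp at hy
    · rw [hx] at hy
      obtain ⟨rfl, h2⟩ := Sigma.mk.inj_iff.mp (Sum.inr.inj hy)
      cases eq_of_heq h2
      exact sim_step hdisj he hsim hu hv hus hvs
        (SimpleGraph.ConnectedComponent.eq.mp (hc.trans hc'.symm))
  | cons h W ih =>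
    rename_i x z y
    intro u v hu hv hxu hyv
    rcases h with ⟨v₀, i, c, hx1, hz1, hsupp, hcomp⟩ | ⟨v₀, i, c, hz1, hx1, hsupp, hcomp⟩
    · rcases hxu with hx2 | ⟨i', c', hx2, _⟩
      · rw [hx1] at hx2; cases Sum.inl.inj hx2
        exact ih hu hv (Or.inr ⟨i, c, hz1, hsupp, hcomp⟩) hyv
      · rw [hx1] at hx2; simp at hx2
    · rcases hxu with hx2 | ⟨i', c', hx2, hus, hc'⟩
      · rw [hx1] at hx2; simp at hx2
      · rw [hx1] at hx2
        obtain ⟨rfl, h2⟩ := Sigma.mk.inj_iff.mp (Sum.inr.inj hx2)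
        cases eq_of_heq h2
        have hzVs : v₀ ∈ Vs := by
          have h2 := z.2; rw [hz1] at h2; exact h2
        have hr : (regG E i).Reachable u v₀ :=
          SimpleGraph.ConnectedComponent.eq.mp (hc'.trans hcomp.symm)
        exact (sim_step hdisj he hsim hu hzVs hus hsupp hr).trans
          (ih hzVs hv (Or.inl hz1) hyv)

end Sim

instance instSkelVFinite {V : Type*} [Finite V] {k : ℕ} (E : Fin k → Set (Sym2 V)) (Vs : Set V) :
    Finite (SkelV E Vs) := by
  unfold SkelV
  have : ∀ i : Fin k, Finite ((regG E i).ConnectedComponent) :=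
    fun i => Quot.finite _
  infer_instance

instance instSkelCCFinite {V : Type*} [Finite V] {k : ℕ} (E : Fin k → Set (Sym2 V)) (Vs : Set V) :
    Finite ((skelGraph E Vs).ConnectedComponent) := Quot.finite _

lemma card_lt_iff_not_inj {A B : Type*} [Finite A] (f : A → B)
    (hf : Function.Surjective f) :
    Nat.card B < Nat.card A ↔ ¬ Function.Injective f := by
  have hle := Nat.card_le_card_of_surjective f hf
  constructor
  · intro hlt hinj
    have := Nat.card_eq_of_bijective f ⟨hinj, hf⟩
    omega
  · intro hninj
    rcases hle.lt_or_eq with h | h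
    · exact h
    · exact absurd ((Nat.bijective_iff_surjective_and_card f).mpr ⟨hf, h.symm⟩).1 hninj

lemma deleteEdges_mono_graph {G H : SimpleGraph V} (h : G ≤ H) (s : Set (Sym2 V)) :
    G.deleteEdges s ≤ H.deleteEdges s := by
  intro x y hxy
  rw [SimpleGraph.deleteEdges_adj] at *
  exact ⟨h hxy.1, hxy.2⟩

end Stmt7Aux

open SimpleGraph Stmt7Aux in
/-- With `G`, a region partition `E`, a skeleton set `Vs` and the
skeleton graph as before, let `e ∈ E j` be an edge of `G` and equip
`G' = G − e` with the partition `fun i => E i \ {e}` (which removes `e` from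
`E j` and leaves the other parts unchanged, by disjointness) and the same skeleton
set.  Then the skeleton graph of `G'` has strictly more connected components than
the skeleton graph of `G` iff `e` is a bridge of `G` and some two vertices of
`Vs ∩ V(R j)` are connected in the region graph `R j` but not in `R j − e`. -/
theorem stmt7 {V : Type*} [Fintype V] (G : SimpleGraph V) {k : ℕ}
    (E : Fin k → Set (Sym2 V))
    (hunion : ⋃ i, E i = G.edgeSet)
    (hdisj : ∀ i j, i ≠ j → Disjoint (E i) (E j))
    (Vs : Set V)
    (hVs : ∀ v : V,
      (∃ i j, i ≠ j ∧ (∃ e ∈ E i, v ∈ e) ∧ (∃ e' ∈ E j, v ∈ e')) → v ∈ Vs)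
    (j : Fin k) (e : Sym2 V) (he : e ∈ E j) :
    Nat.card (skelGraph (fun i => E i \ {e}) Vs).ConnectedComponent >
      Nat.card (skelGraph E Vs).ConnectedComponent ↔
    ((e ∈ G.edgeSet ∧ G.IsBridge e) ∧
      ∃ u ∈ Vs, ∃ w ∈ Vs, u ∈ (regG E j).support ∧ w ∈ (regG E j).support ∧
        (regG E j).Reachable u w ∧
        ¬ ((regG E j).deleteEdges {e}).Reachable u w) := by
  classical
  revert he
  induction e using Sym2.ind with | _ a b =>
  intro he
  set e := s(a, b) with hedef
  -- boundary condition for the modified partition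
  have hVs' : ∀ v : V,
      (∃ i j, i ≠ j ∧ (∃ f ∈ E i \ {e}, v ∈ f) ∧ (∃ f' ∈ E j \ {e}, v ∈ f')) → v ∈ Vs := by
    rintro v ⟨i, i', hne, ⟨f1, hf1, hv1⟩, ⟨f2, hf2, hv2⟩⟩
    exact hVs v ⟨i, i', hne, ⟨f1, hf1.1, hv1⟩, ⟨f2, hf2.1, hv2⟩⟩
  have hbig : bigG E = G := by
    unfold bigG; rw [hunion, SimpleGraph.fromEdgeSet_edgeSet]
  have hbig' : bigG (fun i => E i \ {e}) = G.deleteEdges {e} := by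
    unfold bigG
    have h1 : (⋃ i, E i \ {e}) = G.edgeSet \ {e} := by
      rw [← Set.iUnion_diff, hunion]
    rw [h1]
    ext x y
    simp only [SimpleGraph.fromEdgeSet_adj, SimpleGraph.deleteEdges_adj,
      Set.mem_diff, Set.mem_singleton_iff, SimpleGraph.mem_edgeSet]
    exact ⟨fun ⟨⟨h1, h2⟩, _⟩ => ⟨h1, h2⟩, fun ⟨h1, h2⟩ => ⟨⟨h1, h2⟩, h1.ne⟩⟩
  have heG : G.Adj a b := by
    rw [← SimpleGraph.mem_edgeSet, ← hunion]
    exact Set.mem_iUnion.mpr ⟨j, he⟩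
  have hRjle : regG E j ≤ G := le_of_le_of_eq (regG_le_bigG E j) hbig
  -- the component map
  have hsurj := Fcc_surj E Vs e
  rw [gt_iff_lt, card_lt_iff_not_inj _ hsurj]
  -- characterize non-injectivity
  have hchar : ¬ Function.Injective (SimpleGraph.ConnectedComponent.map (Fhom E Vs e)) ↔
      ∃ (u w : V) (hu : u ∈ Vs) (hw : w ∈ Vs),
        (skelGraph E Vs).Reachable ⟨Sum.inl u, hu⟩ ⟨Sum.inl w, hw⟩ ∧
        ¬ (skelGraph (fun i => E i \ {e}) Vs).Reachable ⟨Sum.inl u, hu⟩ ⟨Sum.inl w, hw⟩ := by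
    constructor
    · intro hninj
      by_contra hno
      push_neg at hno
      apply hninj
      intro c1 c2 hc
      obtain ⟨x, rfl⟩ := Quot.exists_rep c1
      obtain ⟨y, rfl⟩ := Quot.exists_rep c2
      obtain ⟨u, hu, hru⟩ := exists_inl_reach (fun i => E i \ {e}) Vs x
      obtain ⟨w, hw, hrw⟩ := exists_inl_reach (fun i => E i \ {e}) Vs y
      have hFx : (skelGraph E Vs).Reachable (Fmap E Vs e x) ⟨Sum.inl u, hu⟩ :=
        hru.map (Fhom E Vs e)
      have hFy : (skelGraph E Vs).Reachable (Fmap E Vs e y) ⟨Sum.inl w, hw⟩ :=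
        hrw.map (Fhom E Vs e)
      have hFxy : (skelGraph E Vs).Reachable (Fmap E Vs e x) (Fmap E Vs e y) :=
        SimpleGraph.ConnectedComponent.exact hc
      have hskel : (skelGraph E Vs).Reachable ⟨Sum.inl u, hu⟩ ⟨Sum.inl w, hw⟩ :=
        (hFx.symm.trans hFxy).trans hFy
      have h' := hno u w hu hw hskel
      exact Quot.sound ((hru.trans h').trans hrw.symm)
    · rintro ⟨u, w, hu, hw, hre, hnre⟩ hinj
      have hkey : (SimpleGraph.ConnectedComponent.map (Fhom E Vs e))
            ((skelGraph (fun i => E i \ {e}) Vs).connectedComponentMk ⟨Sum.inl u, hu⟩) =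
          (SimpleGraph.ConnectedComponent.map (Fhom E Vs e))
            ((skelGraph (fun i => E i \ {e}) Vs).connectedComponentMk ⟨Sum.inl w, hw⟩) :=
        SimpleGraph.ConnectedComponent.sound hre
      exact hnre (SimpleGraph.ConnectedComponent.exact (hinj hkey))
  rw [hchar]
  constructor
  · rintro ⟨u, w, hu, hw, hre, hnre⟩
    have hGr : G.Reachable u w := by
      rw [← hbig]; exact reach_of_skelReach E Vs hu hw hre
    have hGnr : ¬ (G.deleteEdges {e}).Reachable u w := by
      intro h
      exact hnre (skelReach_of_reach (fun i => E i \ {e}) Vs hVs' hu hw (by rw [hbig']; exact h))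
    constructor
    · refine ⟨heG, ?_⟩
      rw [SimpleGraph.isBridge_iff]; intro hab
      obtain ⟨W⟩ := hGr
      rcases crossing G a b W with h1 | ⟨h1, h2⟩ | ⟨h1, h2⟩
      · exact hGnr h1
      · exact hGnr ((h1.trans hab).trans h2)
      · exact hGnr ((h1.trans hab.symm).trans h2)
    · by_contra hno
      push_neg at hno
      have hsim : ∀ u' w', u' ∈ Vs → w' ∈ Vs → u' ∈ (regG E j).support →
          w' ∈ (regG E j).support → (regG E j).Reachable u' w' →
          ((regG E j).deleteEdges {e}).Reachable u' w' := by
        intro u' w' hu' hw' hs1 hs2 hr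
        exact hno u' hu' w' hw' hs1 hs2 hr
      obtain ⟨W⟩ := hre
      exact hnre (skelReach_sim hdisj he hsim W hu hw (Or.inl rfl) (Or.inl rfl))
  · rintro ⟨⟨-, hbridge⟩, u, hu, w, hw, hus, hws, hr, hnr⟩
    refine ⟨u, w, hu, hw, two_step E Vs hu hw hus hws hr, ?_⟩
    intro h
    have hGe : (G.deleteEdges {e}).Reachable u w := by
      rw [← hbig']
      exact reach_of_skelReach (fun i => E i \ {e}) Vs hu hw h
    have hdel_le : (regG E j).deleteEdges {e} ≤ G.deleteEdges {e} :=
      deleteEdges_mono_graph hRjle {e}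
    have hnab : ¬ (G.deleteEdges {e}).Reachable a b := by
      rw [SimpleGraph.isBridge_iff] at hbridge
      exact hbridge
    obtain ⟨W⟩ := hr
    rcases crossing (regG E j) a b W with h1 | ⟨h1, h2⟩ | ⟨h1, h2⟩
    · exact hnr h1
    · exact hnab (((h1.mono hdel_le).symm.trans hGe).trans (h2.mono hdel_le).symm)
    · exact hnab ((h2.mono hdel_le).trans ((hGe.symm.trans (h1.mono hdel_le))))
end

section
/- Let G be a finite simple graph whose edge set is partitioned into regions E_1, …, E_k, let V_s be a skeleton set (a set of vertices containing every boundary vertex of the partition), and let G_s be the associated skeleton graph. If every vertex of G is incident to edges of at most c different parts of the partition, then G_s has at most c · |V_s| auxiliary vertices (hence at most (1 + c) · |V_s| vertices in total) and at most c · |V_s| edges. -/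
/-- With `G`, a region partition `E` and a skeleton set `Vs`
(containing all boundary vertices) as before, if every vertex of `G` is incident
to edges of at most `c` different parts, then the skeleton graph has at most
`c * |Vs|` auxiliary vertices, hence at most `(1 + c) * |Vs|` vertices in total,
and at most `c * |Vs|` edges. -/
theorem stmt10 {V : Type*} [Fintype V] (G : SimpleGraph V) {k : ℕ}
    (E : Fin k → Set (Sym2 V))
    (hunion : ⋃ i, E i = G.edgeSet)
    (hdisj : ∀ i j, i ≠ j → Disjoint (E i) (E j))
    (Vs : Set V)
    (hVs : ∀ v : V,
      (∃ i j, i ≠ j ∧ (∃ e ∈ E i, v ∈ e) ∧ (∃ e' ∈ E j, v ∈ e')) → v ∈ Vs)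
    (c : ℕ)
    (hc : ∀ v : V, {i : Fin k | ∃ e ∈ E i, v ∈ e}.ncard ≤ c) :
    Nat.card {x : SkelV E Vs // ∃ p, x.1 = Sum.inr p} ≤ c * Vs.ncard ∧
    Nat.card (SkelV E Vs) ≤ (1 + c) * Vs.ncard ∧
    (skelGraph E Vs).edgeSet.ncard ≤ c * Vs.ncard := by
  classical
  haveI hfin : ∀ i : Fin k, Finite ((regG E i).ConnectedComponent) :=
    fun i => Finite.of_surjective (regG E i).connectedComponentMk
      (fun cc => cc.exists_rep)
  have hsupp : ∀ (i : Fin k) (v : V), v ∈ (regG E i).support → ∃ e ∈ E i, v ∈ e := by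
    intro i v hv
    rw [SimpleGraph.mem_support] at hv
    obtain ⟨w, hw⟩ := hv
    rw [regG, SimpleGraph.fromEdgeSet_adj] at hw
    exact ⟨s(v, w), hw.1, Sym2.mem_mk_left v w⟩
  haveI : Fintype ↥Vs := Fintype.ofFinite _
  haveI : ∀ v : ↥Vs, Fintype {i : Fin k // ∃ e ∈ E i, (v : V) ∈ e} :=
    fun v => Fintype.ofFinite _
  set A := Σ v : ↥Vs, {i : Fin k // ∃ e ∈ E i, (v : V) ∈ e} with hAdef
  have hcardA : Nat.card A ≤ c * Vs.ncard := by
    have h1 : Nat.card A = ∑ v : ↥Vs, Fintype.card {i : Fin k // ∃ e ∈ E i, (v : V) ∈ e} := by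
      rw [Nat.card_eq_fintype_card]; exact Fintype.card_sigma
    have h2 : ∀ v : ↥Vs, Fintype.card {i : Fin k // ∃ e ∈ E i, (v : V) ∈ e} ≤ c := by
      intro v
      rw [← Nat.card_eq_fintype_card]
      exact le_trans (le_of_eq (Nat.card_coe_set_eq _)) (hc (v : V))
    calc Nat.card A ≤ Finset.univ.card • c := by
          rw [h1]; exact Finset.sum_le_card_nsmul _ _ _ (fun v _ => h2 v)
      _ = c * Vs.ncard := by
          rw [smul_eq_mul, Finset.card_univ, ← Nat.card_eq_fintype_card,
            Nat.card_coe_set_eq, mul_comm]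
  -- the auxiliary-vertex bound
  have hax : ∀ x : {x : SkelV E Vs // ∃ p, x.1 = Sum.inr p},
      ∃ (v : V) (i : Fin k) (hv : v ∈ Vs) (_ : ∃ e ∈ E i, v ∈ e),
        x.1.1 = Sum.inr ⟨i, (regG E i).connectedComponentMk v⟩ := by
    rintro ⟨⟨x1, hx1⟩, p, hp⟩
    simp only at hp
    subst hp
    obtain ⟨i, cc⟩ := p
    obtain ⟨v, hv, hs, hcc⟩ := hx1
    refine ⟨v, i, hv, hsupp i v hs, ?_⟩
    exact (congrArg (fun d => (Sum.inr ⟨i, d⟩ :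
      V ⊕ (Σ j : Fin k, (regG E j).ConnectedComponent))) hcc).symm
  choose va ia hva hia hxa using hax
  have haux : Nat.card {x : SkelV E Vs // ∃ p, x.1 = Sum.inr p} ≤ c * Vs.ncard := by
    refine le_trans (Nat.card_le_card_of_injective
      (fun x => (⟨⟨va x, hva x⟩, ⟨ia x, hia x⟩⟩ : A)) ?_) hcardA
    intro x y hxy
    have h := congrArg (fun s : A => ((s.1 : V), (s.2 : Fin k))) hxy
    simp only [Prod.mk.injEq] at h
    apply Subtype.ext; apply Subtype.ext
    rw [hxa x, hxa y, h.1, h.2]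
  -- the edge bound
  have hedge : ∀ e : Sym2 (SkelV E Vs), e ∈ (skelGraph E Vs).edgeSet →
      ∃ (v : V) (i : Fin k) (hv : v ∈ Vs) (hs : v ∈ (regG E i).support),
        e = s((⟨Sum.inl v, hv⟩ : SkelV E Vs),
              (⟨Sum.inr ⟨i, (regG E i).connectedComponentMk v⟩,
                ⟨v, hv, hs, rfl⟩⟩ : SkelV E Vs)) := by
    intro e
    induction e using Sym2.ind with
    | _ x y =>
      intro he
      rw [SimpleGraph.mem_edgeSet] at he
      obtain (⟨v, i, cc, h1, h2, h3, h4⟩ | ⟨v, i, cc, h1, h2, h3, h4⟩) := he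
      · subst h4
        have hv : v ∈ Vs := by have := x.2; rw [h1] at this; exact this
        refine ⟨v, i, hv, h3, ?_⟩
        have hx : x = ⟨Sum.inl v, hv⟩ := Subtype.ext h1
        have hy : y = (⟨Sum.inr ⟨i, (regG E i).connectedComponentMk v⟩,
            ⟨v, hv, h3, rfl⟩⟩ : SkelV E Vs) := Subtype.ext h2
        rw [hx, hy]
        rfl
      · subst h4
        have hv : v ∈ Vs := by have := y.2; rw [h1] at this; exact this
        refine ⟨v, i, hv, h3, ?_⟩
        have hy : y = ⟨Sum.inl v, hv⟩ := Subtype.ext h1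
        have hx : x = (⟨Sum.inr ⟨i, (regG E i).connectedComponentMk v⟩,
            ⟨v, hv, h3, rfl⟩⟩ : SkelV E Vs) := Subtype.ext h2
        rw [Sym2.eq_swap, hy, hx]
        rfl
  choose ve ie hve hse hE using hedge
  have hmk : ∀ (v v' : V) (i i' : Fin k) (hv : v ∈ Vs) (hv' : v' ∈ Vs)
      (hs : v ∈ (regG E i).support) (hs' : v' ∈ (regG E i').support),
      v = v' → i = i' →
      s((⟨Sum.inl v, hv⟩ : SkelV E Vs),
        (⟨Sum.inr ⟨i, (regG E i).connectedComponentMk v⟩, ⟨v, hv, hs, rfl⟩⟩ : SkelV E Vs)) =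
      s((⟨Sum.inl v', hv'⟩ : SkelV E Vs),
        (⟨Sum.inr ⟨i', (regG E i').connectedComponentMk v'⟩,
          ⟨v', hv', hs', rfl⟩⟩ : SkelV E Vs)) := by
    rintro v v' i i' _ _ _ _ rfl rfl; rfl
  have hedges : (skelGraph E Vs).edgeSet.ncard ≤ c * Vs.ncard := by
    rw [← Nat.card_coe_set_eq]
    refine le_trans (Nat.card_le_card_of_injective
      (fun x : ↥(skelGraph E Vs).edgeSet =>
        (⟨⟨ve x.1 x.2, hve x.1 x.2⟩,
          ⟨ie x.1 x.2, hsupp _ _ (hse x.1 x.2)⟩⟩ : A)) ?_) hcardA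
    intro x y hxy
    have h := congrArg (fun s : A => ((s.1 : V), (s.2 : Fin k))) hxy
    simp only [Prod.mk.injEq] at h
    apply Subtype.ext
    rw [hE x.1 x.2, hE y.1 y.2]
    exact hmk (ve x.1 x.2) (ve y.1 y.2) (ie x.1 x.2) (ie y.1 y.2)
      (hve x.1 x.2) (hve y.1 y.2) (hse x.1 x.2) (hse y.1 y.2) h.1 h.2
  haveI : Finite (SkelV E Vs) := Subtype.finite
  -- the total-vertex bound
  have htot : Nat.card (SkelV E Vs) ≤ (1 + c) * Vs.ncard := by
    have hinj : Function.Injective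
        (fun x : SkelV E Vs =>
          (match x with
            | ⟨Sum.inl v, h⟩ => Sum.inl ⟨v, h⟩
            | ⟨Sum.inr p, h⟩ => Sum.inr ⟨⟨Sum.inr p, h⟩, p, rfl⟩ :
            ↥Vs ⊕ {x : SkelV E Vs // ∃ p, x.1 = Sum.inr p})) := by
      rintro ⟨x1 | x1, hx⟩ ⟨y1 | y1, hy⟩ hxy
      · exact Subtype.ext (congrArg Sum.inl (congrArg Subtype.val (Sum.inl.inj hxy)))
      · exact absurd hxy (Sum.inl_ne_inr)
      · exact absurd hxy (Sum.inr_ne_inl)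
      · exact congrArg Subtype.val (Sum.inr.inj hxy)
    have h1 := Nat.card_le_card_of_injective _ hinj
    rw [Nat.card_sum, Nat.card_coe_set_eq] at h1
    calc Nat.card (SkelV E Vs)
        ≤ Vs.ncard + Nat.card {x : SkelV E Vs // ∃ p, x.1 = Sum.inr p} := h1
      _ ≤ Vs.ncard + c * Vs.ncard := by omega
      _ = (1 + c) * Vs.ncard := by ring
  exact ⟨haux, htot, hedges⟩
end
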